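/- For every integer n ≥ 1, the Weyl dimension of the irreducible representation of USp(n,ℍ) of highest weight (1,1,…,1) equals the Catalan number: ∏_{1≤i≤j≤n} (2n+4−i−j)/(2n+2−i−j) = Cat(n+1) = (1/(n+2))·C(2n+2, n+1). Moreover, for every n ≥ 3 one has Cat(n+1) ≤ n^{(n+2)/2}. -/

import Mathlib

private lemma tel19 (f : ℕ → ℝ) (a : ℕ) : ∀ b, a ≤ b →
    ((∀ m, a ≤ m → m ≤ b + 1 → f m ≠ 0) →
    ∏ m ∈ Finset.Ico a b, (f m / f (m + 2)) = f a * f (a + 1) / (f b * f (b + 1))) := by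
  refine Nat.le_induction ?_ ?_
  · intro h
    rw [Finset.Ico_self, Finset.prod_empty, div_self]
    exact mul_ne_zero (h a le_rfl (by omega)) (h (a+1) (by omega) (by omega))
  · intro b hab ih h
    rw [Finset.prod_Ico_succ_top hab, ih (fun m hm hm' => h m hm (by omega))]
    have h1 : f b ≠ 0 := h b hab (by omega)
    have h2 : f (b+1) ≠ 0 := h (b+1) (by omega) (by omega)
    have h3 : f (b+2) ≠ 0 := h (b+2) (by omega) (by omega)
    field_simp

private lemma catkey19 (n : ℕ) :
    (n+3)*(n+2)*catalan (n+2) = (2*n+4)*(2*n+3)*catalan (n+1) := by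
  have h1 := succ_mul_catalan_eq_centralBinom (n+1)
  have h2 := succ_mul_catalan_eq_centralBinom (n+2)
  have h3 := Nat.succ_mul_centralBinom_succ (n+1)
  calc (n+3)*(n+2)*catalan (n+2) = (n+2)*((n+2+1)*catalan (n+2)) := by ring
    _ = (n+2)*Nat.centralBinom (n+2) := by rw [h2]
    _ = (n+1+1) * Nat.centralBinom (n+1+1) := by ring_nf
    _ = 2*(2*(n+1)+1) * Nat.centralBinom (n+1) := h3
    _ = 2*(2*n+3)*((n+1+1)*catalan (n+1)) := by rw [h1]; ring
    _ = (2*n+4)*(2*n+3)*catalan (n+1) := by ring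

private lemma catprod19 (n : ℕ) :
    ∏ t ∈ Finset.range n, ((2*(t:ℝ)+4)*(2*(t:ℝ)+3)/(((t:ℝ)+3)*((t:ℝ)+2))) = catalan (n+1) := by
  induction n with
  | zero => simp
  | succ n ih =>
    rw [Finset.prod_range_succ, ih]
    have hkey : ((n:ℝ)+3)*((n:ℝ)+2)*(catalan (n+2) : ℝ)
        = (2*(n:ℝ)+4)*(2*(n:ℝ)+3)*(catalan (n+1) : ℝ) := by
      exact_mod_cast congrArg (Nat.cast (R := ℝ)) (catkey19 n)
    have h2 : ((n:ℝ)+3) ≠ 0 := by positivity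
    have h3 : ((n:ℝ)+2) ≠ 0 := by positivity
    field_simp
    linarith [hkey]

private lemma twoterm19 (x : ℕ) : ∀ m, x^(m+1) + (m+1)*x^m ≤ (x+1)^(m+1) := by
  intro m
  induction m with
  | zero => simp
  | succ m ih =>
    calc x^(m+2) + (m+2)*x^(m+1) ≤ (x^(m+1) + (m+1)*x^m)*(x+1) := by
          nlinarith [pow_succ x m, pow_succ x (m+1), Nat.zero_le (x^m)]
      _ ≤ (x+1)^(m+1)*(x+1) := Nat.mul_le_mul_right _ ih
      _ = (x+1)^(m+2) := by rw [← pow_succ]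

private lemma binA19 (n : ℕ) (hn : 3 ≤ n) : 16 * n^(n+2) ≤ (n+1)^(n+3) := by
  rcases le_or_gt 13 n with h | h
  · calc 16 * n^(n+2) ≤ n * n^(n+2) + (n+3) * n^(n+2) := by nlinarith [Nat.zero_le (n^(n+2))]
      _ = n^(n+3) + (n+3)*n^(n+2) := by ring
      _ ≤ (n+1)^(n+3) := twoterm19 n (n+2)
  · interval_cases n <;> norm_num

private lemma catsq19 : ∀ n, 3 ≤ n → catalan (n+1)^2 ≤ n^(n+2) := by
  refine Nat.le_induction ?_ ?_
  · have : catalan 4 = 14 := by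
      norm_num [catalan_eq_centralBinom_div, Nat.centralBinom, Nat.choose]
    rw [this]; norm_num
  · intro n hn ih
    have key : (n+3) * catalan (n+2) = (2*(2*n+3)) * catalan (n+1) := by
      have := catkey19 n
      have h2 : 0 < n + 2 := by omega
      apply Nat.eq_of_mul_eq_mul_left h2
      nlinarith [this]
    have hb := binA19 n hn
    have h1 : ((n+3) * catalan (n+2))^2 ≤ (n+3)^2 * (16 * n^(n+2)) := by
      rw [key]
      calc (2*(2*n+3) * catalan (n+1))^2 = (2*(2*n+3))^2 * catalan (n+1)^2 := by ring
        _ ≤ (2*(2*n+3))^2 * n^(n+2) := Nat.mul_le_mul_left _ ih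
        _ ≤ (n+3)^2 * (16 * n^(n+2)) := by nlinarith [Nat.zero_le (n^(n+2))]
    have h2 : (n+3)^2 * catalan (n+2)^2 ≤ (n+3)^2 * (n+1)^(n+3) := by
      calc (n+3)^2 * catalan (n+2)^2 = ((n+3) * catalan (n+2))^2 := by ring
        _ ≤ (n+3)^2 * (16 * n^(n+2)) := h1
        _ ≤ (n+3)^2 * (n+1)^(n+3) := Nat.mul_le_mul_left _ hb
    exact Nat.le_of_mul_le_mul_left h2 (by positivity)

/-- For every `n ≥ 1`, the Weyl dimension of the irreducible representation of `USp(n,ℍ)` of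
highest weight `(1,1,…,1)` equals the Catalan number:
`∏_{1≤i≤j≤n} (2n+4-i-j)/(2n+2-i-j) = Cat(n+1) = (1/(n+2))·C(2n+2, n+1)`.
Moreover, for every `n ≥ 3` one has `Cat(n+1) ≤ n^{(n+2)/2}`. -/
theorem statement19 (n : ℕ) (hn : 1 ≤ n) :
    (∏ i : Fin n, ∏ j ∈ Finset.Ici i,
        ((2 * (n : ℝ) + 4 - (((i : ℕ) : ℝ) + 1) - (((j : ℕ) : ℝ) + 1)) /
          (2 * (n : ℝ) + 2 - (((i : ℕ) : ℝ) + 1) - (((j : ℕ) : ℝ) + 1))) =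
        (catalan (n + 1) : ℝ)) ∧
      ((catalan (n + 1) : ℝ) = 1 / ((n : ℝ) + 2) * (Nat.choose (2 * n + 2) (n + 1) : ℝ)) ∧
      (3 ≤ n → (catalan (n + 1) : ℝ) ≤ (n : ℝ) ^ (((n : ℝ) + 2) / 2)) := by
  refine ⟨?_, ?_, ?_⟩
  · -- Part 1
    have hinner : ∀ i : Fin n, (∏ j ∈ Finset.Ici i,
        ((2 * (n : ℝ) + 4 - (((i : ℕ) : ℝ) + 1) - (((j : ℕ) : ℝ) + 1)) /
          (2 * (n : ℝ) + 2 - (((i : ℕ) : ℝ) + 1) - (((j : ℕ) : ℝ) + 1)))) =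
        (2*(n:ℝ)+2-2*((i:ℕ):ℝ))*(2*(n:ℝ)+1-2*((i:ℕ):ℝ)) /
          (((n:ℝ)+2-((i:ℕ):ℝ))*((n:ℝ)+1-((i:ℕ):ℝ))) := by
      intro i
      have hk : (i:ℕ) < n := i.isLt
      set k := (i:ℕ) with hkk
      set f : ℕ → ℝ := fun m => 2*(n:ℝ)+2-(k:ℝ)-(m:ℝ) with hf
      have hnz : ∀ m, k ≤ m → m ≤ n + 1 → f m ≠ 0 := by
        intro m h1 h2
        have hm : (m:ℝ) ≤ (n:ℝ) + 1 := by exact_mod_cast h2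
        have hkn : (k:ℝ) + 1 ≤ (n:ℝ) := by exact_mod_cast hk
        have : 0 < f m := by simp only [hf]; linarith
        exact ne_of_gt this
      calc (∏ j ∈ Finset.Ici i,
            ((2 * (n : ℝ) + 4 - (((i : ℕ) : ℝ) + 1) - (((j : ℕ) : ℝ) + 1)) /
              (2 * (n : ℝ) + 2 - (((i : ℕ) : ℝ) + 1) - (((j : ℕ) : ℝ) + 1))))
          = ∏ j ∈ Finset.Ici i, (f (j:ℕ) / f ((j:ℕ) + 2)) := by
            refine Finset.prod_congr rfl fun j _ => ?_
            simp only [hf, hkk]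
            push_cast
            ring_nf
        _ = ∏ m ∈ Finset.Icc k (n-1), (f m / f (m + 2)) := by
            rw [show Finset.Icc k (n-1) = Finset.Ico (i:ℕ) n by ext; simp [hkk]; omega, ← Fin.map_valEmbedding_Ici, Finset.prod_map]
            rfl
        _ = ∏ m ∈ Finset.Ico k n, (f m / f (m + 2)) := by
            have hone : Finset.Icc k (n-1) = Finset.Ico k n := by
              rw [← Finset.Ico_add_one_right_eq_Icc]
              congr 1
              omega
            rw [hone]
        _ = f k * f (k+1) / (f n * f (n+1)) := tel19 f k n (le_of_lt hk) hnz
        _ = (2*(n:ℝ)+2-2*((k:ℕ):ℝ))*(2*(n:ℝ)+1-2*((k:ℕ):ℝ)) /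
              (((n:ℝ)+2-((k:ℕ):ℝ))*((n:ℝ)+1-((k:ℕ):ℝ))) := by
            simp only [hf]
            push_cast
            ring_nf
    rw [Finset.prod_congr rfl (fun i _ => hinner i)]
    rw [Fin.prod_univ_eq_prod_range (fun k =>
      (2*(n:ℝ)+2-2*((k:ℕ):ℝ))*(2*(n:ℝ)+1-2*((k:ℕ):ℝ)) /
        (((n:ℝ)+2-((k:ℕ):ℝ))*((n:ℝ)+1-((k:ℕ):ℝ)))) n]
    rw [← Finset.prod_range_reflect]
    rw [← catprod19 n]
    refine Finset.prod_congr rfl fun t ht => ?_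
    have ht' : t < n := Finset.mem_range.mp ht
    have hcast : ((n - 1 - t : ℕ) : ℝ) = (n:ℝ) - 1 - (t:ℝ) := by
      have h1 : n - 1 - t = n - (t+1) := by omega
      have h2 : t + 1 ≤ n := ht'
      rw [h1, Nat.cast_sub h2]
      push_cast
      ring
    rw [hcast]
    congr 1 <;> ring
  · -- Part 2
    have h := succ_mul_catalan_eq_centralBinom (n+1)
    have h2 : Nat.centralBinom (n+1) = Nat.choose (2*n+2) (n+1) := by
      rw [Nat.centralBinom_eq_two_mul_choose]
      congr 1
    rw [h2] at h
    have hc : ((n:ℝ)+2) * (catalan (n+1) : ℝ) = (Nat.choose (2*n+2) (n+1) : ℝ) := by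
      exact_mod_cast congrArg (Nat.cast (R := ℝ)) h
    have hne : ((n:ℝ)+2) ≠ 0 := by positivity
    rw [one_div, inv_mul_eq_div, eq_div_iff hne]
    linarith
  · -- Part 3
    intro h3
    have hsq := catsq19 n h3
    have hcast : ((catalan (n+1) : ℝ))^2 ≤ (n:ℝ)^(n+2) := by exact_mod_cast hsq
    have hn0 : (0:ℝ) ≤ (n:ℝ) := by positivity
    have heq : (n:ℝ) ^ (((n:ℝ)+2)/2) = Real.sqrt ((n:ℝ)^(n+2)) := by
      rw [Real.sqrt_eq_rpow, ← Real.rpow_natCast (n:ℝ) (n+2), ← Real.rpow_mul hn0]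
      congr 1
      push_cast
      ring
    rw [heq]
    exact Real.le_sqrt_of_sq_le hcast
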